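/- Let H be a complex Hilbert space and t, s densely defined closed operators on H. Then their adjoints t*, s* are densely defined closed operators and ‖P_{G(t*)} − P_{G(s*)}‖ = ‖P_{G(t)} − P_{G(s)}‖; that is, taking adjoints is an isometry for the gap metric. -/

import Mathlib

/-- The graph of a densely defined (partial) operator `t` on a Hilbert space `K`, viewed
as a submodule of the Hilbert space `K ⊕ K` (the `ℓ²`-direct sum `WithLp 2 (K × K)`). -/
noncomputable def pmapGraph {K : Type*} [NormedAddCommGroup K] [InnerProductSpace ℂ K]
    (t : K →ₗ.[ℂ] K) : Submodule ℂ (WithLp 2 (K × K)) :=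
  t.graph.comap (WithLp.linearEquiv 2 ℂ (K × K)).toLinearMap

/-- `P` is the orthogonal projection of the Hilbert space `E` onto the subspace `G`:
it is the (unique) selfadjoint idempotent bounded operator with range `G`. -/
def IsOrthogonalProjectionOnto {E : Type*} [NormedAddCommGroup E] [InnerProductSpace ℂ E]
    [CompleteSpace E] (P : E →L[ℂ] E) (G : Submodule ℂ E) : Prop :=
  IsSelfAdjoint P ∧ IsIdempotentElem P ∧ LinearMap.range (P : E →ₗ[ℂ] E) = G

set_option linter.unusedSectionVars false

namespace GapAux

section Proj

local notation "⟪" x ", " y "⟫" => @inner ℂ _ _ x y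

variable {E : Type*} [NormedAddCommGroup E] [InnerProductSpace ℂ E] [CompleteSpace E]




lemma symm_of_sa {P : E →L[ℂ] E} (h : IsSelfAdjoint P) (x y : E) : ⟪P x, y⟫ = ⟪x, P y⟫ :=
  ((ContinuousLinearMap.isSelfAdjoint_iff_isSymmetric).mp h) x y

lemma fix_of_mem_range {P : E →L[ℂ] E} (hi : IsIdempotentElem P) {y : E}
    (hy : y ∈ LinearMap.range (P : E →ₗ[ℂ] E)) : P y = y := by
  obtain ⟨z, rfl⟩ := hy
  have := congrArg (fun A : E →L[ℂ] E => A z) hi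
  simpa using this

lemma sub_mem_orthogonal {P : E →L[ℂ] E} {G : Submodule ℂ E}
    (hP : IsOrthogonalProjectionOnto P G) (x : E) : x - P x ∈ Gᗮ := by
  obtain ⟨hsa, hi, hr⟩ := hP
  intro u hu
  have hu' : P u = u := fix_of_mem_range hi (hr ▸ hu)
  calc ⟪u, x - P x⟫ = ⟪P u, x - P x⟫ := by rw [hu']
    _ = ⟪u, P (x - P x)⟫ := symm_of_sa hsa u _
    _ = 0 := by
        have : P (x - P x) = 0 := by
          have := congrArg (fun A : E →L[ℂ] E => A x) hi
          simp only [ContinuousLinearMap.mul_apply] at this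
          simp [map_sub, this]
        rw [this, inner_zero_right]

lemma proj_unique {P Q : E →L[ℂ] E} {G : Submodule ℂ E}
    (hP : IsOrthogonalProjectionOnto P G) (hQ : IsOrthogonalProjectionOnto Q G) : P = Q := by
  ext x
  have h1 : P x - Q x ∈ G := G.sub_mem (hP.2.2 ▸ LinearMap.mem_range_self _ x)
    (hQ.2.2 ▸ LinearMap.mem_range_self _ x)
  have h2 : P x - Q x ∈ Gᗮ := by
    have := Gᗮ.sub_mem (sub_mem_orthogonal hQ x) (sub_mem_orthogonal hP x)
    simpa using this
  have := h2 _ h1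
  rw [inner_self_eq_zero] at this
  exact sub_eq_zero.mp this

lemma ker_eq_orthogonal {P : E →L[ℂ] E} {G : Submodule ℂ E}
    (hP : IsOrthogonalProjectionOnto P G) {x : E} (hx : x ∈ Gᗮ) : P x = 0 := by
  have h1 : ⟪P x, P x⟫ = ⟪x, P (P x)⟫ := symm_of_sa hP.1 x (P x)
  have h2 : P (P x) = P x := fix_of_mem_range hP.2.1 (LinearMap.mem_range_self _ x)
  have h3 : ⟪P x, x⟫ = 0 := by
    have : (P x) ∈ G := hP.2.2 ▸ LinearMap.mem_range_self _ x
    exact hx _ this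
  have h4 : ⟪x, P x⟫ = 0 := by rw [← inner_conj_symm, h3, map_zero]
  rw [h2, h4] at h1
  rw [← inner_self_eq_zero (𝕜 := ℂ)]; exact h1

lemma proj_compl {P : E →L[ℂ] E} {G : Submodule ℂ E}
    (hP : IsOrthogonalProjectionOnto P G) : IsOrthogonalProjectionOnto (1 - P) Gᗮ := by
  refine ⟨(IsSelfAdjoint.one (E →L[ℂ] E)).sub hP.1, hP.2.1.one_sub, ?_⟩
  ext x
  constructor
  · rintro ⟨y, rfl⟩
    simpa using sub_mem_orthogonal hP y
  · intro hx
    exact ⟨x, by simp [ker_eq_orthogonal hP hx]⟩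

lemma proj_conj (e : E ≃ₗᵢ[ℂ] E) {P : E →L[ℂ] E} {G : Submodule ℂ E}
    (hP : IsOrthogonalProjectionOnto P G) :
    IsOrthogonalProjectionOnto
      ((e.toLinearIsometry.toContinuousLinearMap.comp P).comp
        e.symm.toLinearIsometry.toContinuousLinearMap)
      (G.map (e.toLinearEquiv : E →ₗ[ℂ] E)) := by
  refine ⟨?_, ?_, ?_⟩
  · rw [ContinuousLinearMap.isSelfAdjoint_iff_isSymmetric]
    intro x y
    show ⟪e (P (e.symm x)), y⟫ = ⟪x, e (P (e.symm y))⟫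
    calc ⟪e (P (e.symm x)), y⟫ = ⟪e (P (e.symm x)), e (e.symm y)⟫ := by
          rw [e.apply_symm_apply]
      _ = ⟪P (e.symm x), e.symm y⟫ := e.inner_map_map _ _
      _ = ⟪e.symm x, P (e.symm y)⟫ := symm_of_sa hP.1 _ _
      _ = ⟪e (e.symm x), e (P (e.symm y))⟫ := (e.inner_map_map _ _).symm
      _ = ⟪x, e (P (e.symm y))⟫ := by simp
  · rw [IsIdempotentElem]
    ext x
    have := congrArg (fun A : E →L[ℂ] E => A (e.symm x)) hP.2.1
    simp only [ContinuousLinearMap.mul_apply] at this ⊢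
    simp [this]
  · ext x
    simp only [LinearMap.mem_range, ContinuousLinearMap.coe_comp', Function.comp_apply,
      LinearIsometry.coe_toContinuousLinearMap, LinearIsometryEquiv.coe_toLinearIsometry,
      Submodule.mem_map]
    constructor
    · rintro ⟨y, rfl⟩
      exact ⟨P (e.symm y), hP.2.2 ▸ LinearMap.mem_range_self _ _, rfl⟩
    · rintro ⟨y, hy, rfl⟩
      obtain ⟨z, rfl⟩ := hP.2.2.symm ▸ hy
      exact ⟨e z, by simp⟩

lemma map_orthogonal (e : E ≃ₗᵢ[ℂ] E) (G : Submodule ℂ E) :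
    (Gᗮ).map (e.toLinearEquiv : E →ₗ[ℂ] E) = (G.map (e.toLinearEquiv : E →ₗ[ℂ] E))ᗮ := by
  ext x
  constructor
  · rintro ⟨y, hy, rfl⟩
    rintro u ⟨v, hv, rfl⟩
    simpa [e.inner_map_map] using hy v hv
  · intro hx
    refine ⟨e.symm x, ?_, by simp⟩
    intro u hu
    have := hx (e u) ⟨u, hu, rfl⟩
    calc ⟪u, e.symm x⟫ = ⟪e u, e (e.symm x)⟫ := (e.inner_map_map _ _).symm
      _ = ⟪e u, x⟫ := by simp
      _ = 0 := this

lemma norm_conj (e : E ≃ₗᵢ[ℂ] E) (A : E →L[ℂ] E) :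
    ‖(e.toLinearIsometry.toContinuousLinearMap.comp A).comp
      e.symm.toLinearIsometry.toContinuousLinearMap‖ = ‖A‖ := by
  rw [show e.symm.toLinearIsometry.toContinuousLinearMap = (e.symm : E →L[ℂ] E) from rfl,
    ContinuousLinearMap.opNorm_comp_linearIsometryEquiv,
    LinearIsometry.norm_toContinuousLinearMap_comp]


end Proj

section Graph

local notation "⟪" x ", " y "⟫" => @inner ℂ _ _ x y

variable {K : Type*} [NormedAddCommGroup K] [InnerProductSpace ℂ K]

noncomputable def flipE : WithLp 2 (K × K) ≃ₗᵢ[ℂ] WithLp 2 (K × K) :=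
  ((WithLp.linearEquiv 2 ℂ (K × K)).trans
    ((LinearEquiv.prodComm ℂ K K).trans
      (((LinearEquiv.neg ℂ).prodCongr (LinearEquiv.refl ℂ K)).trans
        (WithLp.linearEquiv 2 ℂ (K × K)).symm))).isometryOfInner (by
    intro x y
    simp [WithLp.prod_inner_apply, add_comm])

@[simp] lemma flipE_fst (p : WithLp 2 (K × K)) : (flipE p).fst = -p.snd := rfl
@[simp] lemma flipE_snd (p : WithLp 2 (K × K)) : (flipE p).snd = p.fst := rfl

lemma mem_pmapGraph (t : K →ₗ.[ℂ] K) (p : WithLp 2 (K × K)) :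
    p ∈ pmapGraph t ↔ (p.fst, p.snd) ∈ t.graph := Iff.rfl

/-- The graph of the adjoint is the orthogonal complement of the flipped graph. -/
lemma pmapGraph_adjoint [CompleteSpace K] (t : K →ₗ.[ℂ] K) (hd : Dense (t.domain : Set K)) :
    pmapGraph t.adjoint = ((pmapGraph t).map flipE.toLinearEquiv.toLinearMap)ᗮ := by
  ext p
  rw [mem_pmapGraph, LinearPMap.mem_graph_iff, Submodule.mem_orthogonal]
  constructor
  · rintro ⟨y, hy1, hy2⟩
    rintro u ⟨q, hq, rfl⟩
    rw [SetLike.mem_coe, mem_pmapGraph, LinearPMap.mem_graph_iff] at hq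
    obtain ⟨a, ha1, ha2⟩ := hq
    have key : ⟪t.adjoint y, (a : K)⟫ = ⟪(y : K), t a⟫ :=
      LinearPMap.adjoint_isFormalAdjoint hd y a
    have ha1' : (a : K) = q.fst := ha1
    have ha2' : t a = q.snd := ha2
    have hy1' : (y : K) = p.fst := hy1
    have hy2' : t.adjoint y = p.snd := hy2
    show ⟪(flipE q).fst, p.fst⟫ + ⟪(flipE q).snd, p.snd⟫ = 0
    rw [flipE_fst, flipE_snd, ← ha1', ← ha2', ← hy1', ← hy2', inner_neg_left]
    have hconj : ⟪(a : K), t.adjoint y⟫ = ⟪t a, (y : K)⟫ := by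
      rw [← inner_conj_symm, key, inner_conj_symm]
    rw [hconj, neg_add_cancel]
  · intro hp
    have key : ∀ a : t.domain, ⟪p.snd, (a : K)⟫ = ⟪p.fst, t a⟫ := by
      intro a
      have := hp (flipE ((WithLp.equiv 2 (K × K)).symm ((a : K), t a)))
        ⟨(WithLp.equiv 2 (K × K)).symm ((a : K), t a),
          (mem_pmapGraph t _).mpr (t.mem_graph a), rfl⟩
      have h2 : ⟪-(t a), p.fst⟫ + ⟪(a : K), p.snd⟫ = 0 := this
      rw [inner_neg_left, neg_add_eq_zero] at h2
      rw [← inner_conj_symm, ← h2, inner_conj_symm]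
    have hmem : p.fst ∈ t.adjoint.domain :=
      t.mem_adjoint_domain_of_exists p.fst ⟨p.snd, fun a => key a⟩
    refine ⟨⟨p.fst, hmem⟩, rfl, ?_⟩
    exact LinearPMap.adjoint_apply_eq hd ⟨p.fst, hmem⟩ fun a => key a

lemma isClosed_pmapGraph {t : K →ₗ.[ℂ] K} (hc : IsClosed (t.graph : Set (K × K))) :
    IsClosed ((pmapGraph t : Submodule ℂ (WithLp 2 (K × K))) : Set (WithLp 2 (K × K))) := by
  have : ((pmapGraph t : Submodule ℂ (WithLp 2 (K × K))) : Set (WithLp 2 (K × K)))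
      = (WithLp.prodContinuousLinearEquiv 2 ℂ K K) ⁻¹' (t.graph : Set (K × K)) := rfl
  rw [this]
  exact hc.preimage (WithLp.prodContinuousLinearEquiv 2 ℂ K K).continuous

lemma isClosed_graph_of_pmap {t : K →ₗ.[ℂ] K}
    (hc : IsClosed ((pmapGraph t : Submodule ℂ (WithLp 2 (K × K))) : Set (WithLp 2 (K × K)))) :
    IsClosed (t.graph : Set (K × K)) := by
  have : (t.graph : Set (K × K)) = (WithLp.prodContinuousLinearEquiv 2 ℂ K K).symm ⁻¹'
      ((pmapGraph t : Submodule ℂ (WithLp 2 (K × K))) : Set (WithLp 2 (K × K))) := rfl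
  rw [this]
  exact hc.preimage (WithLp.prodContinuousLinearEquiv 2 ℂ K K).symm.continuous

lemma flip_graph_closed [CompleteSpace K] {t : K →ₗ.[ℂ] K}
    (hc : IsClosed (t.graph : Set (K × K))) :
    IsClosed ((((pmapGraph t).map flipE.toLinearEquiv.toLinearMap) :
      Submodule ℂ (WithLp 2 (K × K))) : Set (WithLp 2 (K × K))) := by
  rw [Submodule.map_coe]
  exact (flipE.toHomeomorph.isClosedMap) _ (isClosed_pmapGraph hc)

lemma adjoint_dense_domain [CompleteSpace K] {t : K →ₗ.[ℂ] K}
    (hd : Dense (t.domain : Set K)) (hc : IsClosed (t.graph : Set (K × K))) :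
    Dense (t.adjoint.domain : Set K) := by
  rw [Submodule.dense_iff_topologicalClosure_eq_top,
    ← Submodule.orthogonal_orthogonal_eq_closure]
  have hbot : (t.adjoint.domain)ᗮ = ⊥ := by
    rw [Submodule.eq_bot_iff]
    intro z hz
    set v : WithLp 2 (K × K) := (WithLp.equiv 2 (K × K)).symm (z, 0) with hv
    have hvmem : v ∈ (pmapGraph t.adjoint)ᗮ := by
      rw [Submodule.mem_orthogonal]
      intro u hu
      rw [mem_pmapGraph, LinearPMap.mem_graph_iff] at hu
      obtain ⟨y, hy1, hy2⟩ := hu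
      show ⟪u.fst, v.fst⟫ + ⟪u.snd, v.snd⟫ = 0
      have : ⟪u.fst, z⟫ = 0 := by
        rw [show u.fst = (y : K) from hy1.symm]
        exact hz _ y.2
      simpa [hv] using this
    rw [pmapGraph_adjoint t hd, Submodule.orthogonal_orthogonal_eq_closure,
      IsClosed.submodule_topologicalClosure_eq (flip_graph_closed hc)] at hvmem
    obtain ⟨q, hq, hflip⟩ := hvmem
    rw [SetLike.mem_coe, mem_pmapGraph, LinearPMap.mem_graph_iff] at hq
    obtain ⟨a, ha1, ha2⟩ := hq
    have h1 : (flipE q).fst = v.fst := congrArg _ hflip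
    have h2 : (flipE q).snd = v.snd := congrArg _ hflip
    rw [flipE_snd] at h2
    rw [flipE_fst] at h1
    have hq1 : q.fst = 0 := by simpa [hv] using h2
    have ha0 : (a : K) = 0 := by rw [ha1, hq1]
    have : t a = 0 := by
      have ha' : a = 0 := Subtype.ext ha0
      rw [ha']
      exact t.toFun.map_zero
    have hq2 : q.snd = 0 := by
      have ha2' : t a = q.snd := ha2
      rw [← ha2', this]
    have : v.fst = 0 := by rw [← h1, hq2, neg_zero]
    simpa [hv] using this
  rw [hbot, Submodule.bot_orthogonal_eq_top]


end Graph

end GapAux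

open GapAux in
/-- Let `t, s` be densely defined closed operators on a complex Hilbert space `H`. Then
their adjoints `t*, s*` are densely defined closed operators and
`‖P_{G(t*)} − P_{G(s*)}‖ = ‖P_{G(t)} − P_{G(s)}‖`: taking adjoints is an isometry for
the gap metric. -/
theorem stmt_15 {H : Type*} [NormedAddCommGroup H] [InnerProductSpace ℂ H] [CompleteSpace H]
    (t s : H →ₗ.[ℂ] H)
    (hdt : Dense (t.domain : Set H)) (hct : IsClosed (t.graph : Set (H × H)))
    (hds : Dense (s.domain : Set H)) (hcs : IsClosed (s.graph : Set (H × H))) :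
    Dense (t.adjoint.domain : Set H) ∧ IsClosed (t.adjoint.graph : Set (H × H)) ∧
    Dense (s.adjoint.domain : Set H) ∧ IsClosed (s.adjoint.graph : Set (H × H)) ∧
    ∀ Pt Ps Pt' Ps' : WithLp 2 (H × H) →L[ℂ] WithLp 2 (H × H),
      IsOrthogonalProjectionOnto Pt (pmapGraph t) →
      IsOrthogonalProjectionOnto Ps (pmapGraph s) →
      IsOrthogonalProjectionOnto Pt' (pmapGraph t.adjoint) →
      IsOrthogonalProjectionOnto Ps' (pmapGraph s.adjoint) →
      ‖Pt' - Ps'‖ = ‖Pt - Ps‖ := by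
  have hclosed : ∀ (r : H →ₗ.[ℂ] H), Dense (r.domain : Set H) →
      IsClosed (r.adjoint.graph : Set (H × H)) := by
    intro r hdr
    apply isClosed_graph_of_pmap
    rw [pmapGraph_adjoint r hdr]
    exact Submodule.isClosed_orthogonal _
  refine ⟨adjoint_dense_domain hdt hct, hclosed t hdt,
    adjoint_dense_domain hds hcs, hclosed s hds, ?_⟩
  intro Pt Ps Pt' Ps' hPt hPs hPt' hPs'
  set e : WithLp 2 (H × H) ≃ₗᵢ[ℂ] WithLp 2 (H × H) := flipE with he
  have conjProj : ∀ (r : H →ₗ.[ℂ] H) (P : WithLp 2 (H × H) →L[ℂ] WithLp 2 (H × H)),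
      Dense (r.domain : Set H) → IsOrthogonalProjectionOnto P (pmapGraph r) →
      IsOrthogonalProjectionOnto
        ((e.toLinearIsometry.toContinuousLinearMap.comp (1 - P)).comp
          e.symm.toLinearIsometry.toContinuousLinearMap) (pmapGraph r.adjoint) := by
    intro r P hdr hP
    have h1 := proj_conj e (proj_compl hP)
    rwa [map_orthogonal, ← pmapGraph_adjoint r hdr] at h1
  have hteq : Pt' = (e.toLinearIsometry.toContinuousLinearMap.comp (1 - Pt)).comp
      e.symm.toLinearIsometry.toContinuousLinearMap :=
    proj_unique hPt' (conjProj t Pt hdt hPt)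
  have hseq : Ps' = (e.toLinearIsometry.toContinuousLinearMap.comp (1 - Ps)).comp
      e.symm.toLinearIsometry.toContinuousLinearMap :=
    proj_unique hPs' (conjProj s Ps hds hPs)
  have hdiff : Pt' - Ps' = (e.toLinearIsometry.toContinuousLinearMap.comp (Ps - Pt)).comp
      e.symm.toLinearIsometry.toContinuousLinearMap := by
    rw [hteq, hseq]
    ext x
    simp only [ContinuousLinearMap.sub_apply, ContinuousLinearMap.coe_comp',
      Function.comp_apply, LinearIsometry.coe_toContinuousLinearMap,
      LinearIsometryEquiv.coe_toLinearIsometry, ContinuousLinearMap.one_apply]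
    rw [← map_sub]
    congr 1
    abel
  rw [hdiff, norm_conj, norm_sub_rev]
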